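/- (Commutation of smoothing and differentiation) Define 𝓛_λ^{(d)} g(α) := E_{z∼Unif(S^{d−2})}[g((α + λ z_1 √(1−α²))/√(1+λ²))]. Then for twice-differentiable g, (d/dα) 𝓛_λ^{(d)}(g(α)) = 𝓛_λ^{(d)}(g'(α))/√(1+λ²) − (λ²α/((1+λ²)(d−1))) · 𝓛_λ^{(d+2)}(g''(α)). -/

import Mathlib

open MeasureTheory

noncomputable def sphereMarginal (d : ℕ) : Measure ℝ :=
  (volume.restrict (Set.Ioo (-1 : ℝ) 1)).withDensity fun x =>
    ENNReal.ofReal ((1 - x ^ 2) ^ (((d : ℝ) - 3) / 2) *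
      (Real.Gamma ((d : ℝ) / 2) / (Real.sqrt Real.pi * Real.Gamma (((d : ℝ) - 1) / 2))))

section Aux
open Set Real Filter Topology Metric
open scoped ENNReal NNReal


lemma contOn_rpow_weight (q : ℝ) :
    ContinuousOn (fun x : ℝ => (1 - x ^ 2) ^ q) (Ioo (-1 : ℝ) 1) := by
  apply ContinuousOn.rpow_const
  · fun_prop
  · intro x hx
    left
    nlinarith [hx.1, hx.2]

lemma integrableOn_half : IntegrableOn (fun x : ℝ => (1 - x ^ 2) ^ (-(1/2) : ℝ)) (Ioo (-1 : ℝ) 1) := by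
  have key : IntegrableOn (fun x : ℝ => (1 - x ^ 2) ^ (-(1/2) : ℝ)) (Ioc (-1 : ℝ) 1) := by
    apply intervalIntegral.integrableOn_deriv_of_nonneg (g := Real.arcsin)
      Real.continuous_arcsin.continuousOn
    · intro x hx
      have h1 : x ≠ -1 := ne_of_gt hx.1
      have h2 : x ≠ 1 := ne_of_lt hx.2
      have hpos : (0:ℝ) < 1 - x ^ 2 := by nlinarith [hx.1, hx.2]
      have := Real.hasDerivAt_arcsin h1 h2
      convert this using 1
      rw [Real.rpow_neg hpos.le, Real.sqrt_eq_rpow, one_div]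
      norm_num
    · intro x hx
      have hpos : (0:ℝ) < 1 - x ^ 2 := by nlinarith [hx.1, hx.2]
      positivity
  exact key.mono_set Ioo_subset_Ioc_self

lemma integrableOn_rpow_weight {q : ℝ} (hq : -(1/2) ≤ q) :
    IntegrableOn (fun x : ℝ => (1 - x ^ 2) ^ q) (Ioo (-1 : ℝ) 1) := by
  apply Integrable.mono' integrableOn_half
  · exact (contOn_rpow_weight q).aestronglyMeasurable measurableSet_Ioo
  · filter_upwards [ae_restrict_mem measurableSet_Ioo] with x hx
    have hpos : (0:ℝ) < 1 - x ^ 2 := by nlinarith [hx.1, hx.2]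
    have h1 : 1 - x ^ 2 ≤ 1 := by nlinarith [sq_nonneg x]
    rw [Real.norm_of_nonneg (Real.rpow_nonneg hpos.le _)]
    exact Real.rpow_le_rpow_of_exponent_ge hpos h1 hq

noncomputable def wfun (n : ℕ) (x : ℝ) : ℝ :=
  (1 - x ^ 2) ^ (((n : ℝ) - 3) / 2) *
    (Real.Gamma ((n : ℝ) / 2) / (Real.sqrt Real.pi * Real.Gamma (((n : ℝ) - 1) / 2)))

lemma sphereMarginal_eq (n : ℕ) :
    sphereMarginal n =
      (volume.restrict (Set.Ioo (-1 : ℝ) 1)).withDensity fun x => ENNReal.ofReal (wfun n x) := rfl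

lemma wfun_nonneg {n : ℕ} (hn : 2 ≤ n) {x : ℝ} (hx : x ∈ Ioo (-1:ℝ) 1) : 0 ≤ wfun n x := by
  have hpos : (0:ℝ) < 1 - x ^ 2 := by nlinarith [hx.1, hx.2]
  have h1 : (0:ℝ) < Real.Gamma ((n : ℝ) / 2) := Real.Gamma_pos_of_pos (by positivity)
  have h2 : (0:ℝ) < Real.Gamma (((n : ℝ) - 1) / 2) := by
    apply Real.Gamma_pos_of_pos
    have : (2:ℝ) ≤ (n:ℝ) := by exact_mod_cast hn
    linarith
  have h3 := Real.sqrt_pos.mpr Real.pi_pos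
  have := Real.rpow_nonneg hpos.le (((n : ℝ) - 3) / 2)
  unfold wfun
  positivity

lemma wfun_contOn (n : ℕ) : ContinuousOn (wfun n) (Ioo (-1:ℝ) 1) := by
  apply ContinuousOn.mul _ continuousOn_const
  apply ContinuousOn.rpow_const (by fun_prop)
  intro x hx; left; nlinarith [hx.1, hx.2]

lemma wfun_integrableOn {n : ℕ} (hn : 2 ≤ n) : IntegrableOn (wfun n) (Ioo (-1:ℝ) 1) := by
  apply Integrable.mul_const
  apply integrableOn_rpow_weight
  have : (2:ℝ) ≤ (n:ℝ) := by exact_mod_cast hn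
  linarith

lemma sphereMarginal_finite {n : ℕ} (hn : 2 ≤ n) : IsFiniteMeasure (sphereMarginal n) := by
  constructor
  rw [sphereMarginal_eq, withDensity_apply _ MeasurableSet.univ, Measure.restrict_univ]
  exact (wfun_integrableOn hn).lintegral_lt_top

lemma sphereMarginal_ae_mem (n : ℕ) : ∀ᵐ t ∂(sphereMarginal n), t ∈ Ioo (-1:ℝ) 1 := by
  rw [sphereMarginal_eq]
  exact (withDensity_absolutelyContinuous _ _).ae_le (ae_restrict_mem measurableSet_Ioo)

lemma sphereMarginal_integral {n : ℕ} (hn : 2 ≤ n) (f : ℝ → ℝ) :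
    ∫ t, f t ∂(sphereMarginal n) = ∫ t in Ioo (-1:ℝ) 1, wfun n t * f t := by
  rw [sphereMarginal_eq]
  have hmeas : AEMeasurable (fun x => (wfun n x).toNNReal)
      (volume.restrict (Ioo (-1:ℝ) 1)) :=
    ((wfun_contOn n).aemeasurable measurableSet_Ioo).real_toNNReal
  have : (fun x : ℝ => ENNReal.ofReal (wfun n x)) =
      fun x => ((fun x => (wfun n x).toNNReal) x : ℝ≥0∞) := rfl
  rw [this, integral_withDensity_eq_integral_smul₀ hmeas f]
  apply setIntegral_congr_fun measurableSet_Ioo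
  intro x hx
  simp only [NNReal.smul_def, smul_eq_mul, NNReal.coe_mk, Real.coe_toNNReal _ (wfun_nonneg hn hx)]

lemma parts (D : ℝ) (hD : 3 ≤ D) (h h' : ℝ → ℝ) (hh : Continuous h) (hh' : Continuous h')
    (hde : ∀ x, HasDerivAt h (h' x) x) :
    ∫ x in Ioo (-1:ℝ) 1, x * (1 - x ^ 2) ^ ((D-4)/2) * h x
      = (1/(D-2)) * ∫ x in Ioo (-1:ℝ) 1, (1 - x ^ 2) ^ ((D-2)/2) * h' x := by
  set q : ℝ := (D-4)/2 with hq
  set e : ℝ := (D-2)/2 with he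
  have hD2 : (0:ℝ) < D - 2 := by linarith
  have hepos : (0:ℝ) < e := by rw [he]; linarith
  set Φ : ℝ → ℝ := fun x => -(1/(D-2)) * (1 - x ^ 2) ^ e with hΦdef
  -- derivative of Φ
  have hΦ : ∀ x ∈ Ioo (-1:ℝ) 1, HasDerivAt Φ (x * (1 - x ^ 2) ^ q) x := by
    intro x hx
    have hpos : (0:ℝ) < 1 - x ^ 2 := by nlinarith [hx.1, hx.2]
    have hinner : HasDerivAt (fun x : ℝ => 1 - x ^ 2) (-(2 * x)) x := by
      simpa using (hasDerivAt_pow 2 x).const_sub 1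
    have hr := (Real.hasDerivAt_rpow_const (p := e) (Or.inl hpos.ne')).comp x hinner
    have := hr.const_mul (-(1/(D-2)))
    refine this.congr_deriv ?_
    have hqe : e - 1 = q := by rw [he, hq]; ring
    rw [← hqe, he]
    field_simp
  -- Ψ and its derivative
  have hΨ : ∀ x ∈ Ioo (-1:ℝ) 1, HasDerivAt (fun x => Φ x * h x)
      (x * (1 - x ^ 2) ^ q * h x + Φ x * h' x) x :=
    fun x hx => (hΦ x hx).mul (hde x)
  -- bounds for h, h'
  obtain ⟨M, hM⟩ : ∃ M, ∀ y ∈ Icc (-1:ℝ) 1, |h y| ≤ M :=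
    ⟨sSup (abs ∘ h '' Icc (-1) 1), fun y hy => le_csSup
      ((isCompact_Icc.image (continuous_abs.comp hh)).bddAbove) ⟨y, hy, rfl⟩⟩
  obtain ⟨M', hM'⟩ : ∃ M', ∀ y ∈ Icc (-1:ℝ) 1, |h' y| ≤ M' :=
    ⟨sSup (abs ∘ h' '' Icc (-1) 1), fun y hy => le_csSup
      ((isCompact_Icc.image (continuous_abs.comp hh')).bddAbove) ⟨y, hy, rfl⟩⟩
  have hM0 : 0 ≤ M := le_trans (abs_nonneg _) (hM 0 (by norm_num))
  have hq2 : -(1/2 : ℝ) ≤ q := by rw [hq]; linarith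
  -- integrability
  have I1 : IntegrableOn (fun x => x * (1 - x ^ 2) ^ q * h x) (Ioo (-1:ℝ) 1) := by
    apply Integrable.mono' ((integrableOn_rpow_weight hq2).const_mul M)
    · apply ContinuousOn.aestronglyMeasurable _ measurableSet_Ioo
      exact (continuousOn_id.mul (contOn_rpow_weight q)).mul hh.continuousOn
    · filter_upwards [ae_restrict_mem measurableSet_Ioo] with x hx
      have hpos : (0:ℝ) < 1 - x ^ 2 := by nlinarith [hx.1, hx.2]
      have hxm : x ∈ Icc (-1:ℝ) 1 := ⟨hx.1.le, hx.2.le⟩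
      have h1 : |x| ≤ 1 := abs_le.2 ⟨hx.1.le, hx.2.le⟩
      have := Real.rpow_nonneg hpos.le q
      calc ‖x * (1 - x ^ 2) ^ q * h x‖ = |x| * (1 - x ^ 2) ^ q * |h x| := by
            rw [norm_eq_abs, abs_mul, abs_mul, abs_of_nonneg this]
        _ ≤ 1 * (1 - x ^ 2) ^ q * M := by
            apply mul_le_mul (mul_le_mul_of_nonneg_right h1 this) (hM x hxm)
              (abs_nonneg _) (by positivity)
        _ = M * (1 - x ^ 2) ^ q := by ring
  have hΦcont : Continuous Φ := by
    apply Continuous.mul continuous_const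
    exact (Real.continuous_rpow_const hepos.le).comp (by fun_prop)
  have I2 : IntegrableOn (fun x => Φ x * h' x) (Ioo (-1:ℝ) 1) := by
    have hc : IntegrableOn (fun _ : ℝ => (1/(D-2)) * M') (Ioo (-1:ℝ) 1) :=
      integrableOn_const measure_Ioo_lt_top.ne
    apply Integrable.mono' hc
    · exact (hΦcont.mul hh').continuousOn.aestronglyMeasurable measurableSet_Ioo
    · filter_upwards [ae_restrict_mem measurableSet_Ioo] with x hx
      have hpos : (0:ℝ) < 1 - x ^ 2 := by nlinarith [hx.1, hx.2]
      have h1 : (1 - x ^ 2) ^ e ≤ 1 :=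
        Real.rpow_le_one hpos.le (by nlinarith [sq_nonneg x]) hepos.le
      have hxm : x ∈ Icc (-1:ℝ) 1 := ⟨hx.1.le, hx.2.le⟩
      rw [norm_eq_abs, abs_mul]
      apply mul_le_mul _ (hM' x hxm) (abs_nonneg _) (by positivity)
      rw [hΦdef]
      rw [abs_mul, abs_neg, abs_of_nonneg (by positivity : (0:ℝ) ≤ 1/(D-2)),
        abs_of_nonneg (Real.rpow_nonneg hpos.le e)]
      calc 1/(D-2) * (1 - x^2) ^ e ≤ 1/(D-2) * 1 :=
            mul_le_mul_of_nonneg_left h1 (by positivity)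
        _ = 1/(D-2) := by ring
  -- the exhausting sequence
  set b : ℕ → ℝ := fun n => 1 - 1/((n:ℝ)+2) with hbdef
  have hb01 : ∀ n : ℕ, 0 ≤ b n ∧ b n < 1 := by
    intro n
    have h2 : (0:ℝ) < (n:ℝ) + 2 := by positivity
    have hle : 1/((n:ℝ)+2) ≤ 1/2 := by
      apply div_le_div_of_nonneg_left (by norm_num) (by norm_num)
      linarith [Nat.cast_nonneg (α := ℝ) n]
    have hpos' : 0 < 1/((n:ℝ)+2) := by positivity
    constructor <;> [skip; skip] <;> simp only [hbdef] <;> linarith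
  set s : ℕ → Set ℝ := fun n => Icc (-(b n)) (b n) with hsdef
  have hbmono : Monotone b := by
    intro m n hmn
    simp only [hbdef]
    have : 1/((n:ℝ)+2) ≤ 1/((m:ℝ)+2) := by
      apply div_le_div_of_nonneg_left (by norm_num) (by positivity)
      have : (m:ℝ) ≤ n := by exact_mod_cast hmn
      linarith
    linarith
  have hmono : Monotone s := fun m n hmn =>
    Icc_subset_Icc (neg_le_neg (hbmono hmn)) (hbmono hmn)
  have hsub : ∀ n, s n ⊆ Ioo (-1:ℝ) 1 := by
    intro n x hx
    have := hb01 n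
    exact ⟨by nlinarith [hx.1], by nlinarith [hx.2]⟩
  have hunion : ⋃ n, s n = Ioo (-1:ℝ) 1 := by
    apply Subset.antisymm (iUnion_subset hsub)
    intro x hx
    have habs : |x| < 1 := abs_lt.2 ⟨hx.1, hx.2⟩
    obtain ⟨n, hn⟩ := exists_nat_one_div_lt (by linarith : (0:ℝ) < 1 - |x|)
    refine mem_iUnion.2 ⟨n, ?_⟩
    have hle : 1/((n:ℝ)+2) ≤ 1/((n:ℝ)+1) := by
      apply div_le_div_of_nonneg_left (by norm_num) (by positivity)
      linarith
    have : |x| ≤ b n := by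
      simp only [hbdef]
      have := hn
      push_cast at this ⊢
      linarith
    exact ⟨neg_le_of_abs_le this, le_of_abs_le this⟩
  set f : ℝ → ℝ := fun x => x * (1 - x ^ 2) ^ q * h x + Φ x * h' x with hfdef
  have hfint : IntegrableOn f (Ioo (-1:ℝ) 1) := I1.add I2
  have htend1 : Tendsto (fun n => ∫ x in s n, f x) atTop (𝓝 (∫ x in Ioo (-1:ℝ) 1, f x)) := by
    have := tendsto_setIntegral_of_monotone (fun n => measurableSet_Icc) hmono
      (hunion ▸ hfint)
    rwa [hunion] at this
  have hfcont : ContinuousOn f (Ioo (-1:ℝ) 1) := by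
    apply ContinuousOn.add
    · exact (continuousOn_id.mul (contOn_rpow_weight q)).mul hh.continuousOn
    · exact (hΦcont.mul hh').continuousOn
  have hval : ∀ n, ∫ x in s n, f x = Φ (b n) * h (b n) - Φ (-(b n)) * h (-(b n)) := by
    intro n
    have hle : -(b n) ≤ b n := by have := hb01 n; linarith [(hb01 n).1]
    rw [hsdef]
    rw [integral_Icc_eq_integral_Ioc, ← intervalIntegral.integral_of_le hle]
    apply intervalIntegral.integral_eq_sub_of_hasDerivAt (f := fun y => Φ y * h y)
    · intro x hx
      rw [uIcc_of_le hle] at hx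
      have hx' : x ∈ Ioo (-1:ℝ) 1 := hsub n hx
      exact hΨ x hx'
    · apply ContinuousOn.intervalIntegrable
      rw [uIcc_of_le hle]
      exact hfcont.mono (hsub n)
  have hblim : Tendsto b atTop (𝓝 1) := by
    have h0 : Tendsto (fun n : ℕ => 1/((n:ℝ)+2)) atTop (𝓝 0) := by
      apply (tendsto_one_div_atTop_nhds_zero_nat.comp (tendsto_add_atTop_nat 2)).congr
      intro n; simp only [Function.comp_apply]; push_cast; rw [one_div]
    have h2 := h0.const_sub 1
    simp only [sub_zero] at h2
    exact h2
  have hΨzero : ∀ y : ℝ, y ^ 2 = 1 → Φ y * h y = 0 := by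
    intro y hy
    have : Φ y = 0 := by
      simp only [hΦdef, hy, sub_self, Real.zero_rpow hepos.ne', mul_zero]
    rw [this, zero_mul]
  have htend2 : Tendsto (fun n => Φ (b n) * h (b n) - Φ (-(b n)) * h (-(b n))) atTop (𝓝 0) := by
    have hc : Continuous fun y => Φ y * h y := hΦcont.mul hh
    have l1 : Tendsto (fun n => Φ (b n) * h (b n)) atTop (𝓝 (Φ 1 * h 1)) :=
      (hc.tendsto 1).comp hblim
    have l2 : Tendsto (fun n => Φ (-(b n)) * h (-(b n))) atTop (𝓝 (Φ (-1) * h (-1))) :=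
      (hc.tendsto (-1)).comp hblim.neg
    have := l1.sub l2
    rw [hΨzero 1 (by norm_num), hΨzero (-1) (by norm_num), sub_zero] at this
    exact this
  have hzero : ∫ x in Ioo (-1:ℝ) 1, f x = 0 := by
    apply tendsto_nhds_unique htend1
    exact (Filter.Tendsto.congr (fun n => (hval n).symm) htend2)
  rw [hfdef] at hzero
  rw [integral_add I1 I2] at hzero
  have hneg : ∫ x in Ioo (-1:ℝ) 1, Φ x * h' x
      = -((1/(D-2)) * ∫ x in Ioo (-1:ℝ) 1, (1 - x ^ 2) ^ ((D-2)/2) * h' x) := by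
    rw [← integral_const_mul, ← integral_neg]
    apply setIntegral_congr_fun measurableSet_Ioo
    intro x hx
    simp only [hΦdef, ← he]
    ring
  rw [hneg] at hzero
  linarith

lemma stein (d : ℕ) (hd : 3 ≤ d) (h h' : ℝ → ℝ) (hh : Continuous h) (hh' : Continuous h')
    (hde : ∀ x, HasDerivAt h (h' x) x) :
    ∫ t, t * h t ∂(sphereMarginal (d - 1))
      = (1/((d:ℝ)-1)) * ∫ t, h' t ∂(sphereMarginal (d + 1)) := by
  have hD : (3:ℝ) ≤ (d:ℝ) := by exact_mod_cast hd
  set D := (d:ℝ) with hDdef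
  have hcast1 : ((d - 1 : ℕ) : ℝ) = D - 1 := by
    rw [Nat.cast_sub (by omega)]; norm_num; exact hDdef.symm
  have hcast2 : ((d + 1 : ℕ) : ℝ) = D + 1 := by push_cast; ring
  set c1 : ℝ := Real.Gamma ((D-1)/2) / (Real.sqrt Real.pi * Real.Gamma ((D-2)/2)) with hc1
  set c2 : ℝ := Real.Gamma ((D+1)/2) / (Real.sqrt Real.pi * Real.Gamma (D/2)) with hc2
  have hw1 : ∀ x : ℝ, wfun (d-1) x = (1 - x^2) ^ ((D-4)/2) * c1 := by
    intro x; rw [wfun, hcast1, hc1]; norm_num [show D - 1 - 3 = D - 4 by ring,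
      show D - 1 - 1 = D - 2 by ring]
  have hw2 : ∀ x : ℝ, wfun (d+1) x = (1 - x^2) ^ ((D-2)/2) * c2 := by
    intro x; rw [wfun, hcast2, hc2]; norm_num [show D + 1 - 3 = D - 2 by ring,
      show D + 1 - 1 = D by ring]
  rw [sphereMarginal_integral (by omega) _, sphereMarginal_integral (by omega) _]
  have e1 : ∫ x in Ioo (-1:ℝ) 1, wfun (d-1) x * (x * h x)
      = c1 * ∫ x in Ioo (-1:ℝ) 1, x * (1 - x^2) ^ ((D-4)/2) * h x := by
    rw [← integral_const_mul]
    congr 1; funext x; rw [hw1]; ring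
  have e2 : ∫ x in Ioo (-1:ℝ) 1, wfun (d+1) x * h' x
      = c2 * ∫ x in Ioo (-1:ℝ) 1, (1 - x^2) ^ ((D-2)/2) * h' x := by
    rw [← integral_const_mul]
    congr 1; funext x; rw [hw2]; ring
  rw [e1, e2, parts D hD h h' hh hh' hde]
  have hγ2 : (0:ℝ) < Real.Gamma ((D-2)/2) := Real.Gamma_pos_of_pos (by linarith)
  have hγ1 : (0:ℝ) < Real.Gamma ((D-1)/2) := Real.Gamma_pos_of_pos (by linarith)
  have hπ : (0:ℝ) < Real.sqrt Real.pi := Real.sqrt_pos.mpr Real.pi_pos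
  have hg1 : Real.Gamma ((D+1)/2) = ((D-1)/2) * Real.Gamma ((D-1)/2) := by
    rw [show (D+1)/2 = (D-1)/2 + 1 by ring, Real.Gamma_add_one (by intro hc; nlinarith [hc])]
  have hg2 : Real.Gamma (D/2) = ((D-2)/2) * Real.Gamma ((D-2)/2) := by
    rw [show D/2 = (D-2)/2 + 1 by ring, Real.Gamma_add_one (by intro hc; nlinarith [hc])]
  rw [hc1, hc2, hg1, hg2]
  have h1 : D - 1 ≠ 0 := by intro hc; nlinarith [hc]
  have h2 : D - 2 ≠ 0 := by intro hc; nlinarith [hc]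
  field_simp

-- Cauchy–Schwarz style bound
lemma u_mem {lam x t : ℝ} (hx : x ∈ Icc (-1:ℝ) 1) (ht : t ∈ Icc (-1:ℝ) 1) :
    (x + lam * t * Real.sqrt (1 - x ^ 2)) / Real.sqrt (1 + lam ^ 2) ∈ Icc (-1:ℝ) 1 := by
  have hr : (0:ℝ) < Real.sqrt (1 + lam ^ 2) := Real.sqrt_pos.mpr (by positivity)
  have hr2 : Real.sqrt (1 + lam ^ 2) ^ 2 = 1 + lam ^ 2 := Real.sq_sqrt (by positivity)
  have hs2 : Real.sqrt (1 - x ^ 2) ^ 2 = 1 - x ^ 2 := Real.sq_sqrt (by nlinarith [hx.1, hx.2])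
  have hs0 : 0 ≤ Real.sqrt (1 - x ^ 2) := Real.sqrt_nonneg _
  have key : (x + lam * t * Real.sqrt (1 - x ^ 2)) ^ 2 ≤ 1 + lam ^ 2 := by
    nlinarith [sq_nonneg (Real.sqrt (1 - x ^ 2) - lam * t * x),
      mul_nonneg (sq_nonneg lam) (by nlinarith [ht.1, ht.2] : (0:ℝ) ≤ 1 - t ^ 2), hs2]
  have habs : |x + lam * t * Real.sqrt (1 - x ^ 2)| ≤ Real.sqrt (1 + lam ^ 2) := by
    rw [← Real.sqrt_sq_eq_abs]
    exact Real.sqrt_le_sqrt (by nlinarith)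
  rw [mem_Icc, div_le_one hr, le_div_iff₀ hr]
  constructor <;> [nlinarith [abs_le.mp habs]; nlinarith [abs_le.mp habs]]

/-- Commutation of smoothing and differentiation:
`(d/dα) 𝓛_λ^{(d)}(g)(α) = 𝓛_λ^{(d)}(g')(α)/√(1+λ²)
   − (λ²α/((1+λ²)(d−1))) 𝓛_λ^{(d+2)}(g'')(α)`,
where `𝓛_λ^{(d)} g(α) = E_{z∼S^{d-2}}[g((α+λz_1√(1-α²))/√(1+λ²))]`. -/
theorem smoothing_deriv_commute (d : ℕ) (hd : 3 ≤ d) (lam : ℝ) (hlam : 0 < lam)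
    (g : ℝ → ℝ) (hg : ContDiff ℝ 2 g) (α : ℝ) (hα : α ∈ Set.Ioo (-1 : ℝ) 1) :
    HasDerivAt
      (fun a => ∫ t, g ((a + lam * t * Real.sqrt (1 - a ^ 2)) / Real.sqrt (1 + lam ^ 2))
        ∂(sphereMarginal (d - 1)))
      ((∫ t, deriv g ((α + lam * t * Real.sqrt (1 - α ^ 2)) / Real.sqrt (1 + lam ^ 2))
          ∂(sphereMarginal (d - 1))) / Real.sqrt (1 + lam ^ 2) -
        lam ^ 2 * α / ((1 + lam ^ 2) * ((d : ℝ) - 1)) *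
          ∫ t, deriv (deriv g) ((α + lam * t * Real.sqrt (1 - α ^ 2)) / Real.sqrt (1 + lam ^ 2))
            ∂(sphereMarginal (d + 1))) α := by
  haveI : IsFiniteMeasure (sphereMarginal (d - 1)) := sphereMarginal_finite (by omega)
  obtain ⟨hα1, hα2⟩ := hα
  set r : ℝ := Real.sqrt (1 + lam ^ 2) with hrdef
  have hr : 0 < r := Real.sqrt_pos.mpr (by positivity)
  have hr2 : r ^ 2 = 1 + lam ^ 2 := Real.sq_sqrt (by positivity)
  set sα : ℝ := Real.sqrt (1 - α ^ 2) with hsαdef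
  have hsα : 0 < sα := Real.sqrt_pos.mpr (by nlinarith)
  -- the ball
  set ε : ℝ := min (1 + α) (1 - α) / 2 with hεdef
  have hε : 0 < ε := by
    apply div_pos _ (by norm_num)
    exact lt_min (by linarith) (by linarith)
  set β : ℝ := |α| + ε with hβdef
  have hβ1 : β < 1 := by
    rcases abs_cases α with ⟨h1, h2⟩ | ⟨h1, h2⟩ <;>
      [simp only [hβdef, hεdef, h1]; simp only [hβdef, hεdef, h1]] <;>
      [have := min_le_right (1 + α) (1 - α); have := min_le_left (1 + α) (1 - α)] <;> linarith
  have hβ0 : 0 ≤ β := by positivity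
  have hball : ∀ x ∈ ball α ε, |x| ≤ β ∧ x ∈ Ioo (-1:ℝ) 1 := by
    intro x hx
    rw [mem_ball, Real.dist_eq] at hx
    have h1 : |x| ≤ β := by
      have := abs_sub_abs_le_abs_sub x α
      simp only [hβdef]; linarith
    exact ⟨h1, by rcases abs_le.mp h1 with ⟨u, v⟩; constructor <;> linarith⟩
  set σ : ℝ := Real.sqrt (1 - β ^ 2) with hσdef
  have hσ : 0 < σ := Real.sqrt_pos.mpr (by nlinarith)
  have hsball : ∀ x ∈ ball α ε, σ ≤ Real.sqrt (1 - x ^ 2) ∧ (0:ℝ) < 1 - x ^ 2 := by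
    intro x hx
    obtain ⟨h1, h2⟩ := hball x hx
    have h3 : x ^ 2 ≤ β ^ 2 := by
      rw [← sq_abs x]; exact pow_le_pow_left₀ (abs_nonneg x) h1 2
    exact ⟨Real.sqrt_le_sqrt (by linarith), by nlinarith [h2.1, h2.2]⟩
  -- bounds on g, g'
  have hgc : Continuous g := hg.continuous
  have hg1 : ContDiff ℝ 1 (deriv g) := by
    have := (contDiff_succ_iff_deriv (n := 1)).mp (by exact_mod_cast hg)
    exact this.2.2
  have hgc' : Continuous (deriv g) := hg1.continuous
  obtain ⟨M0, hM0⟩ : ∃ M, ∀ y ∈ Icc (-1:ℝ) 1, |g y| ≤ M :=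
    ⟨sSup (abs ∘ g '' Icc (-1) 1), fun y hy => le_csSup
      ((isCompact_Icc.image (continuous_abs.comp hgc)).bddAbove) ⟨y, hy, rfl⟩⟩
  obtain ⟨M1, hM1⟩ : ∃ M, ∀ y ∈ Icc (-1:ℝ) 1, |deriv g y| ≤ M :=
    ⟨sSup (abs ∘ deriv g '' Icc (-1) 1), fun y hy => le_csSup
      ((isCompact_Icc.image (continuous_abs.comp hgc')).bddAbove) ⟨y, hy, rfl⟩⟩
  have hM1nn : 0 ≤ M1 := le_trans (abs_nonneg _) (hM1 0 (by norm_num))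
  -- derivative of inner map
  have hinner : ∀ t : ℝ, ∀ x ∈ ball α ε,
      HasDerivAt (fun x => (x + lam * t * Real.sqrt (1 - x ^ 2)) / r)
        ((1 + lam * t * (-x / Real.sqrt (1 - x ^ 2))) / r) x := by
    intro t x hx
    obtain ⟨hσle, hpos⟩ := hsball x hx
    have hsx : 0 < Real.sqrt (1 - x ^ 2) := lt_of_lt_of_le hσ hσle
    have h1 : HasDerivAt (fun x : ℝ => 1 - x ^ 2) (-(2 * x)) x := by
      simpa using (hasDerivAt_pow 2 x).const_sub 1
    have h2 : HasDerivAt (fun x : ℝ => Real.sqrt (1 - x ^ 2))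
        (-x / Real.sqrt (1 - x ^ 2)) x := by
      have := (Real.hasDerivAt_sqrt hpos.ne').comp x h1
      refine this.congr_deriv ?_
      field_simp
    exact ((hasDerivAt_id x).add (h2.const_mul (lam * t))).div_const r
  have hgd : ∀ y, HasDerivAt g (deriv g y) y :=
    fun y => ((hg.differentiable (by norm_num)) y).hasDerivAt
  -- the parametric family and its derivative
  set F : ℝ → ℝ → ℝ :=
    fun x t => g ((x + lam * t * Real.sqrt (1 - x ^ 2)) / r) with hFdef
  set F' : ℝ → ℝ → ℝ := fun x t =>
    deriv g ((x + lam * t * Real.sqrt (1 - x ^ 2)) / r) *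
      ((1 + lam * t * (-x / Real.sqrt (1 - x ^ 2))) / r) with hF'def
  have hF'bound : ∀ᵐ t ∂(sphereMarginal (d - 1)), ∀ x ∈ ball α ε,
      ‖F' x t‖ ≤ M1 * ((1 + lam * (1 / σ)) / r) := by
    filter_upwards [sphereMarginal_ae_mem (d - 1)] with t ht
    intro x hx
    obtain ⟨hxβ, hxI⟩ := hball x hx
    obtain ⟨hσle, hpos⟩ := hsball x hx
    have hsx : 0 < Real.sqrt (1 - x ^ 2) := lt_of_lt_of_le hσ hσle
    have ht1 : |t| ≤ 1 := abs_le.2 ⟨ht.1.le, ht.2.le⟩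
    have hx1 : |x| ≤ 1 := le_trans hxβ hβ1.le
    have hu := u_mem (lam := lam) (abs_le.mp hx1) ⟨ht.1.le, ht.2.le⟩
    rw [hF'def, norm_eq_abs, abs_mul]
    have hb1 : |deriv g ((x + lam * t * Real.sqrt (1 - x ^ 2)) / r)| ≤ M1 := hM1 _ hu
    have hz : |lam * t * (-x / Real.sqrt (1 - x ^ 2))| ≤ lam * (1 / σ) := by
      have e1 : |lam * t * (-x / Real.sqrt (1 - x ^ 2))|
          = |lam| * |t| * (|x| / Real.sqrt (1 - x ^ 2)) := by
        rw [abs_mul, abs_mul, abs_div, abs_neg, abs_of_pos hsx]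
      rw [e1, abs_of_pos hlam]
      have h3 : |x| / Real.sqrt (1 - x ^ 2) ≤ 1 / σ := div_le_div₀ zero_le_one hx1 hσ hσle
      calc lam * |t| * (|x| / Real.sqrt (1 - x ^ 2)) ≤ lam * 1 * (1 / σ) := by
            apply mul_le_mul (mul_le_mul_of_nonneg_left ht1 hlam.le) h3 (by positivity)
              (by positivity)
        _ = lam * (1 / σ) := by ring
    have hb2 : |(1 + lam * t * (-x / Real.sqrt (1 - x ^ 2))) / r| ≤ (1 + lam * (1 / σ)) / r := by
      rw [abs_div, abs_of_pos hr]
      apply (div_le_div_iff_of_pos_right hr).mpr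
      exact (abs_add_le 1 _).trans (by rw [abs_one]; linarith)
    exact (mul_le_mul hb1 hb2 (abs_nonneg _) hM1nn).trans_eq rfl
  have hFcont : ∀ x : ℝ, Continuous (F x) := by
    intro x
    apply hgc.comp
    fun_prop
  have hF'cont : Continuous (F' α) := by
    apply Continuous.mul
    · apply hgc'.comp; fun_prop
    · fun_prop
  have hFα_int : Integrable (F α) (sphereMarginal (d - 1)) := by
    apply Integrable.mono' (integrable_const M0) ((hFcont α).aestronglyMeasurable)
    filter_upwards [sphereMarginal_ae_mem (d - 1)] with t ht
    exact hM0 _ (u_mem ⟨hα1.le, hα2.le⟩ ⟨ht.1.le, ht.2.le⟩)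
  have hmain := hasDerivAt_integral_of_dominated_loc_of_deriv_le (ball_mem_nhds α hε)
    (Filter.Eventually.of_forall fun x => (hFcont x).aestronglyMeasurable)
    hFα_int hF'cont.aestronglyMeasurable hF'bound (integrable_const _)
    (by
      filter_upwards with t
      intro x hx
      exact (hgd _).comp x (hinner t x hx))
  have hDeriv : HasDerivAt (fun x => ∫ t, F x t ∂(sphereMarginal (d - 1)))
      (∫ t, F' α t ∂(sphereMarginal (d - 1))) α := hmain.2
  convert hDeriv using 1
  -- now compute the value of the derivative
  set h : ℝ → ℝ := fun y => deriv g ((α + lam * y * sα) / r) with hhdef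
  set h' : ℝ → ℝ := fun y => deriv (deriv g) ((α + lam * y * sα) / r) * (lam * sα / r)
    with hh'def
  have hgc'' : Continuous (deriv (deriv g)) := by
    have := (contDiff_succ_iff_deriv (n := 0)).mp (by exact_mod_cast hg1)
    exact contDiff_zero.mp this.2.2
  have hh : Continuous h := by apply hgc'.comp; fun_prop
  have hh' : Continuous h' := by apply Continuous.mul _ continuous_const; apply hgc''.comp; fun_prop
  have hgd' : ∀ y, HasDerivAt (deriv g) (deriv (deriv g) y) y :=
    fun y => ((hg1.differentiable one_ne_zero) y).hasDerivAt
  have hde : ∀ y, HasDerivAt h (h' y) y := by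
    intro y
    have hi : HasDerivAt (fun y => (α + lam * y * sα) / r) (lam * sα / r) y := by
      have := ((((hasDerivAt_id y).const_mul lam).mul_const sα).const_add α).div_const r
      simpa [mul_one] using this
    exact (hgd' _).comp y hi
  have hstein := stein d hd h h' hh hh' hde
  have hμ2 : ∫ t, h' t ∂(sphereMarginal (d + 1))
      = (∫ t, deriv (deriv g) ((α + lam * t * sα) / r) ∂(sphereMarginal (d + 1)))
        * (lam * sα / r) := integral_mul_const _ _
  -- integrability of the pieces
  have hJ1 : Integrable (fun t => deriv g ((α + lam * t * sα) / r))
      (sphereMarginal (d - 1)) := by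
    apply Integrable.mono' (integrable_const M1) (hh.aestronglyMeasurable)
    filter_upwards [sphereMarginal_ae_mem (d - 1)] with t ht
    exact hM1 _ (u_mem ⟨hα1.le, hα2.le⟩ ⟨ht.1.le, ht.2.le⟩)
  have hJ2 : Integrable (fun t => t * deriv g ((α + lam * t * sα) / r))
      (sphereMarginal (d - 1)) := by
    apply Integrable.mono' (integrable_const M1)
      ((continuous_id.mul hh).aestronglyMeasurable)
    filter_upwards [sphereMarginal_ae_mem (d - 1)] with t ht
    have ht1 : |t| ≤ 1 := abs_le.2 ⟨ht.1.le, ht.2.le⟩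
    rw [norm_eq_abs, Pi.mul_apply, abs_mul]
    calc |t| * |deriv g ((α + lam * t * sα) / r)| ≤ 1 * M1 :=
          mul_le_mul ht1 (hM1 _ (u_mem ⟨hα1.le, hα2.le⟩ ⟨ht.1.le, ht.2.le⟩))
            (abs_nonneg _) zero_le_one
      _ = M1 := one_mul M1
  have hsplit : ∫ t, F' α t ∂(sphereMarginal (d - 1))
      = (1/r) * ∫ t, deriv g ((α + lam * t * sα) / r) ∂(sphereMarginal (d - 1))
        - (lam * α / (r * sα)) *
          ∫ t, t * deriv g ((α + lam * t * sα) / r) ∂(sphereMarginal (d - 1)) := by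
    rw [← integral_const_mul, ← integral_const_mul, ← integral_sub]
    · congr 1
      funext t
      rw [hF'def]
      have : Real.sqrt (1 - α ^ 2) = sα := rfl
      show deriv g ((α + lam * t * sα) / r) * ((1 + lam * t * (-α / sα)) / r) = _
      field_simp
      ring
    · exact hJ1.const_mul _
    · exact (hJ2.const_mul _)
  rw [hsplit]
  have hsteineq : ∫ t, t * deriv g ((α + lam * t * sα) / r) ∂(sphereMarginal (d - 1))
      = (1/((d:ℝ)-1)) *
        ((∫ t, deriv (deriv g) ((α + lam * t * sα) / r) ∂(sphereMarginal (d + 1)))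
          * (lam * sα / r)) := by
    rw [← hμ2]
    exact hstein
  rw [hsteineq]
  have hd1 : ((d:ℝ) - 1) ≠ 0 := by
    have : (3:ℝ) ≤ (d:ℝ) := by exact_mod_cast hd
    intro hc; nlinarith [hc]
  generalize hA : (∫ t, h t ∂(sphereMarginal (d - 1))) = A
  generalize hB : (∫ t, deriv (deriv g) ((α + lam * t * sα) / r) ∂(sphereMarginal (d + 1))) = B
  rw [← hr2]
  field_simp

end Aux
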